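/- If U is a Banach space of 𝔉-universal disposition, then every separable Banach space embeds isometrically into U: for every separable Banach space X there is a linear isometric embedding of X into U. -/

import Mathlib

/-- A bundled Banach space over `ℝ`. -/
structure BanachSpace : Type (u + 1) where
  carrier : Type u
  [norm : NormedAddCommGroup carrier]
  [space : NormedSpace ℝ carrier]
  [complete : CompleteSpace carrier]

attribute [instance] BanachSpace.norm BanachSpace.space BanachSpace.complete

instance : CoeSort BanachSpace.{u} (Type u) := ⟨BanachSpace.carrier⟩

/-- `U` is of universal disposition for finite-dimensional Banach spaces. -/
def IsUnivDispFin (U : BanachSpace.{u}) : Prop :=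
  ∀ A B : BanachSpace.{u}, FiniteDimensional ℝ A.carrier → FiniteDimensional ℝ B.carrier →
    ∀ (u : A.carrier →ₗᵢ[ℝ] U.carrier) (i : A.carrier →ₗᵢ[ℝ] B.carrier),
      ∃ u' : B.carrier →ₗᵢ[ℝ] U.carrier, ∀ a : A.carrier, u' (i a) = u a

section Aux

variable {U X : BanachSpace.{u}}

/-- Inclusion of submodules as a linear isometry. -/
def inclLI {p q : Submodule ℝ X.carrier} (h : p ≤ q) : p →ₗᵢ[ℝ] q :=
  ⟨Submodule.inclusion h, fun _ => rfl⟩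

/-- A finite-dimensional submodule of a Banach space, bundled as a Banach space. -/
noncomputable def bsOf (p : Submodule ℝ X.carrier) [FiniteDimensional ℝ p] :
    BanachSpace.{u} :=
  ⟨p⟩

theorem step (hU : IsUnivDispFin U) {p q : Submodule ℝ X.carrier} (hpq : p ≤ q)
    [hq : FiniteDimensional ℝ q] (f : p →ₗᵢ[ℝ] U.carrier) :
    ∃ g : q →ₗᵢ[ℝ] U.carrier, ∀ x : p, g (Submodule.inclusion hpq x) = f x := by
  haveI : FiniteDimensional ℝ p := Submodule.finiteDimensional_of_le hpq
  exact hU (bsOf p) (bsOf q) (inferInstanceAs (FiniteDimensional ℝ p))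
    (inferInstanceAs (FiniteDimensional ℝ q)) f (inclLI hpq)

end Aux

/-- Every separable Banach space embeds isometrically into any Banach space of universal
disposition for finite-dimensional spaces. -/
theorem separable_embeds_univDispFin (U : BanachSpace.{u}) (hU : IsUnivDispFin U)
    (X : BanachSpace.{u}) (hX : TopologicalSpace.SeparableSpace X.carrier) :
    Nonempty (X.carrier →ₗᵢ[ℝ] U.carrier) := by
  haveI := hX
  haveI : Nonempty X.carrier := ⟨0⟩
  set s : ℕ → X.carrier := TopologicalSpace.denseSeq X.carrier with hs_def
  have hs : DenseRange s := TopologicalSpace.denseRange_denseSeq X.carrier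
  -- the increasing chain of finite-dimensional subspaces
  set A : ℕ → Submodule ℝ X.carrier := fun n => Submodule.span ℝ (s '' Set.Iio n) with hA_def
  have Amono : Monotone A := fun a b hab =>
    Submodule.span_mono (Set.image_mono (Set.Iio_subset_Iio (Nat.cast_le.mpr hab)))
  haveI Afd : ∀ n, FiniteDimensional ℝ (A n) := fun n =>
    FiniteDimensional.span_of_finite ℝ ((Set.finite_Iio n).image s)
  -- the base isometry on the trivial subspace
  have hA0 : ∀ x : A 0, (x : X.carrier) = 0 := by
    intro x
    have himg : s '' Set.Iio 0 = ∅ :=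
      Set.eq_empty_iff_forall_notMem.2 fun y ⟨n, hn, _⟩ => Nat.not_lt_zero n hn
    have hx := x.2
    simp only [hA_def, himg, Submodule.span_empty, Submodule.mem_bot] at hx
    exact hx
  let u0 : (A 0) →ₗᵢ[ℝ] U.carrier :=
    ⟨0, fun x => by simp [hA0 x, show ‖x‖ = ‖(x : X.carrier)‖ from rfl]⟩
  -- recursively build the chain of isometries
  let u : ∀ n, (A n) →ₗᵢ[ℝ] U.carrier := fun n =>
    Nat.rec u0
      (fun n f => Classical.choose (step hU (Amono (Nat.le_succ n)) f)) n
  have compat : ∀ n (x : A n),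
      u (n + 1) (Submodule.inclusion (Amono (Nat.le_succ n)) x) = u n x :=
    fun n => Classical.choose_spec (step hU (Amono (Nat.le_succ n)) (u n))
  have agree : ∀ k m (x : X.carrier) (h1 : x ∈ A m) (h2 : x ∈ A (m + k)),
      u (m + k) ⟨x, h2⟩ = u m ⟨x, h1⟩ := by
    intro k
    induction k with
    | zero => intro m x h1 h2; rfl
    | succ k ih =>
      intro m x h1 h2
      have h' : x ∈ A (m + k) := Amono (Nat.le_add_right m k) h1
      have : (⟨x, h2⟩ : A (m + k + 1)) =
          Submodule.inclusion (Amono (Nat.le_succ (m + k))) ⟨x, h'⟩ := rfl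
      rw [this]
      exact (compat (m + k) ⟨x, h'⟩).trans (ih m x h1 h')
  have agree' : ∀ {m n} (hmn : m ≤ n) (x : X.carrier) (h1 : x ∈ A m) (h2 : x ∈ A n),
      u n ⟨x, h2⟩ = u m ⟨x, h1⟩ := by
    intro m n hmn x h1 h2
    obtain ⟨k, rfl⟩ := Nat.exists_eq_add_of_le hmn
    exact agree k m x h1 h2
  -- the dense subspace
  set D : Submodule ℝ X.carrier := ⨆ n, A n with hD_def
  have memD : ∀ x : D, ∃ n, (x : X.carrier) ∈ A n := by
    intro x
    exact (Submodule.mem_iSup_of_chain ⟨A, Amono⟩ (x : X.carrier)).1 x.2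
  have memD' : ∀ {n} {x : X.carrier}, x ∈ A n → x ∈ D := by
    intro n x hx
    exact Submodule.mem_iSup_of_chain ⟨A, Amono⟩ x |>.2 ⟨n, hx⟩
  -- the map on the dense subspace
  let F : D → U.carrier := fun x =>
    u (Classical.choose (memD x)) ⟨x, Classical.choose_spec (memD x)⟩
  have Fspec : ∀ (x : D) (n) (h : (x : X.carrier) ∈ A n), F x = u n ⟨x, h⟩ := by
    intro x n h
    rcases le_total (Classical.choose (memD x)) n with hle | hle
    · exact (agree' hle (x : X.carrier) (Classical.choose_spec (memD x)) h).symm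
    · exact agree' hle (x : X.carrier) h (Classical.choose_spec (memD x))
  have Fadd : ∀ x y : D, F (x + y) = F x + F y := by
    intro x y
    obtain ⟨m, hm⟩ := memD x
    obtain ⟨n, hn⟩ := memD y
    have hx : (x : X.carrier) ∈ A (max m n) := Amono (le_max_left m n) hm
    have hy : (y : X.carrier) ∈ A (max m n) := Amono (le_max_right m n) hn
    have hxy : ((x + y : D) : X.carrier) ∈ A (max m n) := Submodule.add_mem _ hx hy
    rw [Fspec x _ hx, Fspec y _ hy, Fspec (x + y) _ hxy]
    have : (⟨((x + y : D) : X.carrier), hxy⟩ : A (max m n)) =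
        (⟨x, hx⟩ : A (max m n)) + ⟨y, hy⟩ := rfl
    rw [this, map_add]
  have Fsmul : ∀ (c : ℝ) (x : D), F (c • x) = c • F x := by
    intro c x
    obtain ⟨m, hm⟩ := memD x
    have hcx : ((c • x : D) : X.carrier) ∈ A m := Submodule.smul_mem _ c hm
    rw [Fspec x _ hm, Fspec (c • x) _ hcx]
    have : (⟨((c • x : D) : X.carrier), hcx⟩ : A m) = c • (⟨x, hm⟩ : A m) := rfl
    rw [this, map_smul]
  have Fnorm : ∀ x : D, ‖F x‖ = ‖x‖ := by
    intro x
    obtain ⟨m, hm⟩ := memD x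
    rw [Fspec x _ hm, (u m).norm_map]
    rfl
  let fLI : D →ₗᵢ[ℝ] U.carrier :=
    { toFun := F
      map_add' := Fadd
      map_smul' := Fsmul
      norm_map' := Fnorm }
  -- density of D
  have hdense : Dense (D : Set X.carrier) := by
    apply hs.mono
    rintro _ ⟨n, rfl⟩
    exact memD' (Submodule.subset_span ⟨n, Nat.lt_succ_self n, rfl⟩)
  have hDR : DenseRange (D.subtypeL : D → X.carrier) := hdense.denseRange_val
  have hind : IsUniformInducing (D.subtypeL : D → X.carrier) :=
    isometry_subtype_coe.isUniformInducing
  -- extend to all of X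
  let g : X.carrier →L[ℝ] U.carrier :=
    ContinuousLinearMap.extend fLI.toContinuousLinearMap D.subtypeL
  have hg : ∀ x : D, g x = fLI x := fun x =>
    ContinuousLinearMap.extend_eq fLI.toContinuousLinearMap (e := D.subtypeL) hDR hind x
  have gnorm : ∀ x : X.carrier, ‖g x‖ = ‖x‖ := by
    have : Set.EqOn (fun x => ‖g x‖) (fun x => ‖x‖) (D : Set X.carrier) := by
      intro x hx
      have h1 : g x = fLI ⟨x, hx⟩ := hg ⟨x, hx⟩
      show ‖g x‖ = ‖x‖
      rw [h1]
      exact Fnorm ⟨x, hx⟩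
    have heq := Continuous.ext_on hdense g.continuous.norm continuous_norm this
    exact fun x => congrFun heq x
  exact ⟨⟨g.toLinearMap, gnorm⟩⟩
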